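/- Set n0 := ⌊130^q⌋. For every k ≥ k0, every n ≥ 1, and every n-optimal set α_n ∈ C_{n,r}(μ), the number of points of α_n lying outside ⋃_{σ∈Ω_k} B(c_σ, (9/4)·m^{-k}) is at most n0·φ_k. -/

import Mathlib

open MeasureTheory Metric Set
open scoped ENNReal NNReal

noncomputable section

variable {E : Type*} [NormedAddCommGroup E] [NormedSpace ℝ E]
  [MeasurableSpace E] [BorelSpace E]

/-- The (topological) support of a Borel measure: the set of points all of whose
neighborhoods have positive measure. -/
def msupp (μ : Measure E) : Set E := {x | ∀ ε : ℝ, 0 < ε → 0 < μ (ball x ε)}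

/-- The set of achievable quantization integrals `∫ d(x,α)^r dν` over sets `α` with
`1 ≤ card α ≤ n`. -/
def quantSet (ν : Measure E) (r : ℝ) (n : ℕ) : Set ℝ :=
  {I | ∃ α : Finset E, α.Nonempty ∧ α.card ≤ n ∧ I = ∫ x, infDist x (α : Set E) ^ r ∂ν}

/-- The `n`-th quantization error of order `r`, raised to the power `r`:
`e_{n,r}(ν)^r = inf { ∫ d(x,α)^r dν : 1 ≤ card α ≤ n }`. -/
def quantErrPow (ν : Measure E) (r : ℝ) (n : ℕ) : ℝ := sInf (quantSet ν r n)

/-- `α` is an `n`-optimal set for `ν` of order `r`. -/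
def IsOptimalSet (ν : Measure E) (r : ℝ) (n : ℕ) (α : Finset E) : Prop :=
  α.Nonempty ∧ α.card ≤ n ∧ (∫ x, infDist x (α : Set E) ^ r ∂ν) = quantErrPow ν r n

/-- `P` is a Voronoi partition (into Borel sets) with respect to the finite set `α`. -/
def IsVoronoiPartition (α : Finset E) (P : E → Set E) : Prop :=
  (∀ a ∈ α, MeasurableSet (P a)) ∧
  ((⋃ a ∈ α, P a) = univ) ∧
  (∀ a ∈ α, ∀ b ∈ α, a ≠ b → Disjoint (P a) (P b)) ∧
  (∀ a ∈ α, {x | dist x a < infDist x ((α : Set E) \ {a})} ⊆ P a) ∧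
  (∀ a ∈ α, P a ⊆ {x | dist x a = infDist x (α : Set E)})

/-- `I_a(α,ν) = ∫_{P_a(α)} d(x,α)^r dν`. -/
def voronoiI (ν : Measure E) (r : ℝ) (α : Finset E) (P : E → Set E) (a : E) : ℝ :=
  ∫ x in P a, infDist x (α : Set E) ^ r ∂ν

/-- `μ` is `s0`-dimensional Ahlfors–David regular with constants `ε0, C1, C2`, together
with the global upper bound (valid for all centers and radii). -/
def IsAhlfors (μ : Measure E) (s0 ε0 C1 C2 : ℝ) : Prop :=
  0 < s0 ∧ 0 < ε0 ∧ 0 < C1 ∧ 0 < C2 ∧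
  (∀ x ∈ msupp μ, ∀ ε : ℝ, 0 < ε → ε < ε0 →
    ENNReal.ofReal (C1 * ε ^ s0) ≤ μ (closedBall x ε) ∧
    μ (closedBall x ε) ≤ ENNReal.ofReal (C2 * ε ^ s0)) ∧
  (∀ x : E, ∀ ε : ℝ, 0 < ε → μ (closedBall x ε) ≤ ENNReal.ofReal (C2 * ε ^ s0))

/-- `h` is a similitude of ratio `ρ`. -/
def IsSimilitude (h : E → E) (ρ : ℝ) : Prop :=
  Function.Surjective h ∧ ∀ x y, dist (h x) (h y) = ρ * dist x y

/-- The measure `λ_B = μ(·|B) ∘ h`, i.e. `λ_B(A) = μ(h(A) ∩ B)/μ(B)`. -/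
def condPull (μ : Measure E) (B : Set E) (h : E → E) : Measure E :=
  Measure.comap h (ProbabilityTheory.cond μ B)

/-- There exist `j` pairwise disjoint closed balls of radius `ρ` centered in `K`. -/
def PackingNum (K : Set E) (ρ : ℝ) (j : ℕ) : Prop :=
  ∃ c : Fin j → E, (∀ i, c i ∈ K) ∧
    Pairwise fun i i' => Disjoint (closedBall (c i) ρ) (closedBall (c i') ρ)

set_option linter.unusedSectionVars false

/-- Maximal `δ`-separated subset exists, and is a `δ`-net. -/
lemma exists_max_sep (s : Set E) (δ : ℝ) (hδ : 0 < δ) :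
    ∃ T : Set E, T ⊆ s ∧ (T.Pairwise fun x y => δ < dist x y) ∧
      ∀ y ∈ s, ∃ t ∈ T, dist y t ≤ δ := by
  set 𝒮 : Set (Set E) := {T | T ⊆ s ∧ T.Pairwise fun x y => δ < dist x y} with h𝒮
  have hub : ∀ c ⊆ 𝒮, IsChain (· ⊆ ·) c → ∃ ub ∈ 𝒮, ∀ t ∈ c, t ⊆ ub := by
    intro c hc hchain
    refine ⟨⋃₀ c, ⟨?_, ?_⟩, fun t ht => subset_sUnion_of_mem ht⟩
    · exact sUnion_subset fun t ht => (hc ht).1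
    · intro x hx y hy hne
      obtain ⟨A, hA, hxA⟩ := hx
      obtain ⟨B, hB, hyB⟩ := hy
      rcases hchain.total hA hB with h | h
      · exact (hc hB).2 (h hxA) hyB hne
      · exact (hc hA).2 hxA (h hyB) hne
  obtain ⟨T, hTmax⟩ := zorn_subset 𝒮 hub
  refine ⟨T, hTmax.prop.1, hTmax.prop.2, ?_⟩
  intro y hy
  by_contra hno
  push_neg at hno
  have hins : insert y T ∈ 𝒮 := by
    constructor
    · exact insert_subset hy hTmax.prop.1
    · refine hTmax.prop.2.insert ?_
      intro b hb hne
      have := hno b hb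
      constructor
      · linarith [this]
      · rw [dist_comm]; linarith [this]
  have heq := hTmax.eq_of_subset hins (subset_insert y T)
  have hyT : y ∈ T := heq ▸ mem_insert y T
  have h0 := hno y hyT
  simp only [dist_self] at h0
  linarith

lemma card_sep_in_ball [FiniteDimensional ℝ E] {c : E} {ρ : ℝ} (hρ : 0 < ρ)
    {T : Set E} (hTs : T ⊆ closedBall c (2 * ρ))
    (hsep : T.Pairwise fun x y => ρ / 32 < dist x y) :
    T.Finite ∧ T.ncard ≤ 129 ^ (Module.finrank ℝ E) := by
  classical
  set q := Module.finrank ℝ E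
  set ν := (Module.finBasis ℝ E).addHaar with hν
  have key : ∀ F : Finset E, ↑F ⊆ T → F.card ≤ 129 ^ q := by
    intro F hFT
    have hdisj : (↑F : Set E).PairwiseDisjoint fun x => closedBall x (ρ / 64) := by
      intro x hx y hy hne
      have hd := hsep (hFT hx) (hFT hy) hne
      exact closedBall_disjoint_closedBall (by linarith)
    have hsub : (⋃ x ∈ F, closedBall x (ρ / 64)) ⊆ closedBall c (2 * ρ + ρ / 64) := by
      refine iUnion₂_subset fun x hx => ?_
      have hxc : dist x c ≤ 2 * ρ := hTs (hFT hx)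
      exact closedBall_subset_closedBall' (by linarith)
    have hmeas : ν (⋃ x ∈ F, closedBall x (ρ / 64)) = ∑ x ∈ F, ν (closedBall x (ρ / 64)) :=
      measure_biUnion_finset hdisj fun x _ => measurableSet_closedBall
    have hball : ∀ x : E, ν (closedBall x (ρ / 64))
        = ENNReal.ofReal ((ρ / 64) ^ q) * ν (ball 0 1) := fun x =>
      Measure.addHaar_closedBall ν x (by linarith)
    have hbig : ν (closedBall c (2 * ρ + ρ / 64))
        = ENNReal.ofReal ((2 * ρ + ρ / 64) ^ q) * ν (ball 0 1) :=
      Measure.addHaar_closedBall ν c (by linarith)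
    have hchain : (F.card : ℝ≥0∞) * (ENNReal.ofReal ((ρ / 64) ^ q) * ν (ball 0 1))
        ≤ ENNReal.ofReal ((2 * ρ + ρ / 64) ^ q) * ν (ball 0 1) := by
      calc (F.card : ℝ≥0∞) * (ENNReal.ofReal ((ρ / 64) ^ q) * ν (ball 0 1))
          = ∑ x ∈ F, ν (closedBall x (ρ / 64)) := by
            rw [Finset.sum_congr rfl fun x _ => hball x, Finset.sum_const, nsmul_eq_mul]
        _ = ν (⋃ x ∈ F, closedBall x (ρ / 64)) := hmeas.symm
        _ ≤ ν (closedBall c (2 * ρ + ρ / 64)) := measure_mono hsub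
        _ = _ := hbig
    have hBpos : ν (ball (0:E) 1) ≠ 0 := (measure_ball_pos ν 0 one_pos).ne'
    have hBfin : ν (ball (0:E) 1) ≠ ⊤ := measure_ball_lt_top.ne
    rw [← mul_assoc] at hchain
    have hchain2 : (F.card : ℝ≥0∞) * ENNReal.ofReal ((ρ / 64) ^ q)
        ≤ ENNReal.ofReal ((2 * ρ + ρ / 64) ^ q) :=
      (ENNReal.mul_le_mul_iff_left hBpos hBfin).mp hchain
    have h64 : (0:ℝ) < (ρ / 64) ^ q := by positivity
    have hco : (2 * ρ + ρ / 64) ^ q = 129 ^ q * (ρ / 64) ^ q := by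
      rw [← mul_pow]; ring_nf
    rw [hco, ENNReal.ofReal_mul (by positivity)] at hchain2
    have h0 : ENNReal.ofReal ((ρ / 64) ^ q) ≠ 0 := by
      simp [ENNReal.ofReal_eq_zero, not_le, h64]
    have hfin : ENNReal.ofReal ((ρ / 64) ^ q) ≠ ⊤ := ENNReal.ofReal_ne_top
    have hcard : (F.card : ℝ≥0∞) ≤ ENNReal.ofReal ((129:ℝ) ^ q) :=
      (ENNReal.mul_le_mul_iff_left h0 hfin).mp hchain2
    have : ((129:ℝ) ^ q) = ((129 ^ q : ℕ) : ℝ) := by push_cast; ring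
    rw [this, ENNReal.ofReal_natCast] at hcard
    exact_mod_cast hcard
  have hfin : T.Finite := by
    by_contra hinf
    obtain ⟨F, hFT, hFcard⟩ := Set.Infinite.exists_subset_card_eq hinf (129 ^ q + 1)
    have := key F hFT
    omega
  refine ⟨hfin, ?_⟩
  have := key hfin.toFinset (by simp)
  rwa [Set.ncard_eq_toFinset_card T hfin]

lemma msupp_compl_null [FiniteDimensional ℝ E] (μ : Measure E) : μ (msupp μ)ᶜ = 0 := by
  obtain ⟨D, hDc, hDd⟩ := TopologicalSpace.exists_countable_dense E
  set N : Set (E × ℚ) := {p | p.1 ∈ D ∧ 0 < p.2 ∧ μ (ball p.1 (p.2 : ℝ)) = 0} with hN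
  have hNc : N.Countable := by
    have : N ⊆ D ×ˢ (univ : Set ℚ) := fun p hp => ⟨hp.1, trivial⟩
    exact (hDc.prod countable_univ).mono this
  have hcover : (msupp μ)ᶜ ⊆ ⋃ p ∈ N, ball p.1 (p.2 : ℝ) := by
    intro x hx
    simp only [msupp, mem_compl_iff, mem_setOf_eq, not_forall] at hx
    obtain ⟨ε, hε, hμε⟩ := hx
    have hμ0 : μ (ball x ε) = 0 := by
      by_contra h
      exact hμε (pos_iff_ne_zero.mpr h)
    obtain ⟨d, hdD, hdx⟩ := hDd.exists_dist_lt x (show (0:ℝ) < ε / 4 by linarith)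
    obtain ⟨qq, hq1, hq2⟩ := exists_rat_btwn (show dist x d < ε / 2 by linarith)
    have hq0 : (0:ℚ) < qq := by
      have : (0:ℝ) ≤ dist x d := dist_nonneg
      exact_mod_cast lt_of_le_of_lt this hq1
    have hsub : ball d (qq : ℝ) ⊆ ball x ε := by
      intro y hy
      simp only [mem_ball] at hy ⊢
      have hxd : dist x d < ε / 2 := by linarith
      calc dist y x ≤ dist y d + dist d x := dist_triangle y d x
        _ < (qq : ℝ) + ε / 2 := by rw [dist_comm d x]; exact add_lt_add hy hxd
        _ ≤ ε := by linarith
    have hball0 : μ (ball d (qq : ℝ)) = 0 :=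
      le_antisymm (le_trans (measure_mono hsub) hμ0.le) (zero_le)
    refine mem_biUnion (show (d, qq) ∈ N from ⟨hdD, hq0, hball0⟩) ?_
    simp only [mem_ball]
    exact hq1
  refine le_antisymm (le_trans (measure_mono hcover) ?_) (zero_le)
  rw [(measure_biUnion_null_iff hNc).mpr fun p hp => hp.2.2]


end

/-- With `n0 = ⌊130^q⌋`, for every `k ≥ k0`, every `n ≥ 1` and every
`n`-optimal set `α` for `μ`, the number of points of `α` lying outside
`⋃_{σ∈Ω_k} B(c_σ,(9/4)m^{-k})` is at most `n0·φ_k`. -/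
theorem stmt11 {E : Type*} [NormedAddCommGroup E] [NormedSpace ℝ E]
    [MeasurableSpace E] [BorelSpace E] [FiniteDimensional ℝ E]
    (q : ℕ) (hq : Module.finrank ℝ E = q)
    (r : ℝ) (hr : 0 < r)
    (μ : MeasureTheory.Measure E) [MeasureTheory.IsProbabilityMeasure μ]
    (s0 ε0 C1 C2 : ℝ) (hμ : IsAhlfors μ s0 ε0 C1 C2)
    (m : ℕ) (hm : 2 ≤ m) (k0 : ℕ)
    (hk0 : 2 * ((m : ℝ) ^ k0)⁻¹ < ε0)
    (hk0min : ∀ j : ℕ, 2 * ((m : ℝ) ^ j)⁻¹ < ε0 → k0 ≤ j)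
    (φ : ℕ → ℕ)
    (hφ : ∀ k, k0 ≤ k →
      IsGreatest {j | PackingNum (msupp μ) (((m : ℝ) ^ k)⁻¹) j} (φ k))
    (ctr : (k : ℕ) → Fin (φ k) → E)
    (hctr : ∀ k, k0 ≤ k → (∀ i, ctr k i ∈ msupp μ) ∧
      Pairwise fun i i' => Disjoint (Metric.closedBall (ctr k i) (((m : ℝ) ^ k)⁻¹))
        (Metric.closedBall (ctr k i') (((m : ℝ) ^ k)⁻¹))) :
    ∀ k, k0 ≤ k → ∀ n : ℕ, 1 ≤ n → ∀ α : Finset E, IsOptimalSet μ r n α →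
      {a ∈ (α : Set E) |
          ∀ i : Fin (φ k), a ∉ Metric.closedBall (ctr k i) ((9 / 4 : ℝ) * ((m : ℝ) ^ k)⁻¹)}.ncard
        ≤ ⌊(130 : ℝ) ^ q⌋₊ * φ k := by
  classical
  intro k hk n hn α hα
  obtain ⟨hαne, hαcard, hαopt⟩ := hα
  obtain ⟨hs0, hε0, hC1, hC2, hreg, hglob⟩ := hμ
  set ρ : ℝ := ((m : ℝ) ^ k)⁻¹ with hρdef
  have hm0 : (0:ℝ) < (m:ℝ) ^ k := by
    have : (0:ℝ) < (m:ℝ) := by exact_mod_cast Nat.lt_of_lt_of_le (by norm_num) hm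
    positivity
  have hρ : 0 < ρ := by rw [hρdef]; exact inv_pos.mpr hm0
  set K : Set E := msupp μ with hKdef
  have hKnull : μ Kᶜ = 0 := msupp_compl_null μ
  have hKae : ∀ᵐ y ∂μ, y ∈ K := by
    rw [ae_iff]
    exact hKnull
  have hKne : K.Nonempty := by
    rcases K.eq_empty_or_nonempty with h | h
    · exfalso
      rw [h, compl_empty] at hKnull
      simp [measure_univ] at hKnull
    · exact h
  -- singletons and finite sets are null
  have hsing : ∀ x : E, μ {x} = 0 := by
    intro x
    by_contra h
    have hfin : μ {x} ≠ ⊤ := (measure_lt_top μ _).ne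
    have htpos : 0 < (μ {x}).toReal := ENNReal.toReal_pos h hfin
    have hs0' : s0 ≠ 0 := ne_of_gt hs0
    set tt : ℝ := (μ {x}).toReal with httdef
    set ε : ℝ := (tt / (2 * C2)) ^ (1 / s0) with hεd
    have hbase : (0:ℝ) < tt / (2 * C2) := by positivity
    have hεpos : 0 < ε := Real.rpow_pos_of_pos hbase _
    have hval : C2 * ε ^ s0 = tt / 2 := by
      rw [hεd]
      rw [← Real.rpow_mul hbase.le, one_div, inv_mul_cancel₀ hs0', Real.rpow_one]
      field_simp
    have h1 : μ {x} ≤ ENNReal.ofReal (tt / 2) := by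
      calc μ {x} ≤ μ (closedBall x ε) := by
            refine measure_mono ?_
            intro w hw
            rw [mem_singleton_iff] at hw
            rw [hw]
            exact mem_closedBall_self hεpos.le
        _ ≤ ENNReal.ofReal (C2 * ε ^ s0) := hglob x ε hεpos
        _ = ENNReal.ofReal (tt / 2) := by rw [hval]
    have h2 : ENNReal.ofReal (tt / 2) < μ {x} := by
      conv_rhs => rw [← ENNReal.ofReal_toReal hfin]
      exact (ENNReal.ofReal_lt_ofReal_iff htpos).mpr (by linarith)
    exact absurd h1 (not_le.mpr h2)
  have hfinnull : ∀ s : Set E, s.Finite → μ s = 0 := by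
    intro s hs
    have hseq : s = ⋃ x ∈ s, {x} := by simp
    rw [hseq]
    exact (measure_biUnion_null_iff hs.countable).mpr fun x _ => hsing x
  -- covering of K by the 2ρ-balls
  have hcov : ∀ y ∈ K, ∃ i : Fin (φ k), dist y (ctr k i) ≤ 2 * ρ := by
    intro y hy
    by_contra hno
    push_neg at hno
    have hpack : PackingNum K ρ (φ k + 1) := by
      refine ⟨fun i => if h : (i : ℕ) < φ k then ctr k ⟨i, h⟩ else y, ?_, ?_⟩
      · intro i
        by_cases h : (i : ℕ) < φ k
        · simpa [h] using (hctr k hk).1 ⟨i, h⟩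
        · simpa [h] using hy
      · intro i j hij
        by_cases hi : (i : ℕ) < φ k <;> by_cases hj : (j : ℕ) < φ k
        · simp only [dif_pos hi, dif_pos hj]
          refine (hctr k hk).2 ?_
          intro hcontra
          apply hij
          have hval : (i : ℕ) = (j : ℕ) := by
            have := congrArg (Fin.val : Fin (φ k) → ℕ) hcontra
            simpa using this
          exact Fin.ext hval
        · simp only [dif_pos hi, dif_neg hj]
          refine closedBall_disjoint_closedBall ?_
          have h2 := hno ⟨i, hi⟩
          rw [dist_comm] at h2
          linarith
        · simp only [dif_neg hi, dif_pos hj]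
          refine closedBall_disjoint_closedBall ?_
          have h2 := hno ⟨j, hj⟩
          linarith
        · exfalso
          apply hij
          have hik : (i:ℕ) = φ k := by omega
          have hjk : (j:ℕ) = φ k := by omega
          exact Fin.ext (hik.trans hjk.symm)
    have hle := (hφ k hk).2 hpack
    omega
  have hφ1 : 1 ≤ φ k := by
    obtain ⟨z0, hz0⟩ := hKne
    have hpack : PackingNum K ρ 1 := by
      refine ⟨fun _ => z0, fun _ => hz0, ?_⟩
      intro i j hij
      exact absurd (Subsingleton.elim i j) hij
    exact (hφ k hk).2 hpack
  -- K is bounded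
  obtain ⟨R, hKR⟩ : ∃ R, K ⊆ closedBall 0 R := by
    obtain ⟨T0, hT0K, hT0sep, hT0net⟩ := exists_max_sep K ε0 hε0
    have hvpos : 0 < C1 * (ε0 / 2) ^ s0 := mul_pos hC1 (Real.rpow_pos_of_pos (by linarith) _)
    set v : ℝ≥0∞ := ENNReal.ofReal (C1 * (ε0 / 2) ^ s0) with hv
    have hv0 : v ≠ 0 := by simp [hv, ENNReal.ofReal_eq_zero, not_le, hvpos]
    have hvt : v ≠ ⊤ := ENNReal.ofReal_ne_top
    have hcount : ∀ F : Finset E, ↑F ⊆ T0 → (F.card : ℝ≥0∞) * v ≤ 1 := by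
      intro F hFT
      have hdisj : (↑F : Set E).PairwiseDisjoint fun x => closedBall x (ε0 / 2) := by
        intro x hx y hy hne
        have := hT0sep (hFT hx) (hFT hy) hne
        exact closedBall_disjoint_closedBall (by linarith)
      have hmeas := measure_biUnion_finset (μ := μ) hdisj fun x _ => measurableSet_closedBall
      calc (F.card : ℝ≥0∞) * v = ∑ _x ∈ F, v := by rw [Finset.sum_const, nsmul_eq_mul]
        _ ≤ ∑ x ∈ F, μ (closedBall x (ε0 / 2)) := Finset.sum_le_sum fun x hx =>
            (hreg x (hT0K (hFT hx)) (ε0 / 2) (by linarith) (by linarith)).1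
        _ = μ (⋃ x ∈ F, closedBall x (ε0 / 2)) := hmeas.symm
        _ ≤ μ univ := measure_mono (subset_univ _)
        _ = 1 := measure_univ
    have hT0fin : T0.Finite := by
      by_contra hinf
      obtain ⟨NN, hNN⟩ := ENNReal.exists_nat_gt ((ENNReal.div_lt_top ENNReal.one_ne_top hv0).ne)
      obtain ⟨F, hFT, hFcard⟩ := Set.Infinite.exists_subset_card_eq hinf NN
      have h1 := hcount F hFT
      rw [hFcard] at h1
      have h2 : 1 < (NN : ℝ≥0∞) * v := by
        rwa [ENNReal.div_lt_iff (Or.inl hv0) (Or.inl hvt)] at hNN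
      exact absurd h1 (not_le.mpr h2)
    have hbdd : Bornology.IsBounded (⋃ t ∈ T0, closedBall t ε0) :=
      (Bornology.isBounded_biUnion hT0fin).mpr fun t _ => isBounded_closedBall
    have hsub : K ⊆ ⋃ t ∈ T0, closedBall t ε0 := by
      intro y hy
      obtain ⟨t, ht, hd⟩ := hT0net y hy
      exact mem_biUnion ht (mem_closedBall.mpr hd)
    exact (hbdd.subset hsub).subset_closedBall 0
  -- main argument
  set P : E → Prop :=
    fun a => ∀ i : Fin (φ k), a ∉ closedBall (ctr k i) ((9 / 4 : ℝ) * ρ) with hPdef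
  by_contra hbig
  push_neg at hbig
  set Sf : Finset E := α.filter P with hSf
  have hSeq : {a ∈ (α : Set E) |
      ∀ i : Fin (φ k), a ∉ closedBall (ctr k i) ((9 / 4 : ℝ) * ρ)} = (Sf : Set E) := by
    ext a
    simp [hSf, Finset.mem_filter, hPdef]
  rw [hSeq, Set.ncard_coe_finset] at hbig
  have hfloor : ⌊(130 : ℝ) ^ q⌋₊ = 130 ^ q := by
    rw [show ((130:ℝ) ^ q) = ((130 ^ q : ℕ) : ℝ) by push_cast; ring, Nat.floor_natCast]
  rw [hfloor] at hbig
  -- the net Γ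
  choose T hTsub hTsep hTnet using
    fun i : Fin (φ k) => exists_max_sep (closedBall (ctr k i) (2 * ρ)) (ρ / 32) (by linarith)
  have hfincard := fun i : Fin (φ k) => card_sep_in_ball hρ (hTsub i) (hTsep i)
  have hTfin : ∀ i, (T i).Finite := fun i => (hfincard i).1
  have hTcard : ∀ i, (T i).ncard ≤ 129 ^ q := fun i => by
    have := (hfincard i).2
    rwa [hq] at this
  set Γf : Finset E := Finset.univ.biUnion (fun i : Fin (φ k) => (hTfin i).toFinset) with hΓ
  have hΓcard : Γf.card ≤ φ k * 129 ^ q := by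
    calc Γf.card ≤ ∑ i : Fin (φ k), (hTfin i).toFinset.card := Finset.card_biUnion_le
      _ ≤ ∑ _i : Fin (φ k), 129 ^ q := Finset.sum_le_sum fun i _ => by
          rw [← Set.ncard_eq_toFinset_card (T i) (hTfin i)]
          exact hTcard i
      _ = φ k * 129 ^ q := by
        rw [Finset.sum_const, Finset.card_univ, Fintype.card_fin, smul_eq_mul]
  have hΓnet : ∀ y ∈ K, ∃ t ∈ Γf, dist y t ≤ ρ / 32 := by
    intro y hy
    obtain ⟨i, hi⟩ := hcov y hy
    obtain ⟨t, ht, hd⟩ := hTnet i y (mem_closedBall.mpr hi)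
    exact ⟨t, Finset.mem_biUnion.mpr ⟨i, Finset.mem_univ i, (hTfin i).mem_toFinset.mpr ht⟩, hd⟩
  have hΓne : Γf.Nonempty := by
    have hi0 : 0 < φ k := hφ1
    obtain ⟨t, ht, _⟩ := hTnet ⟨0, hi0⟩ (ctr k ⟨0, hi0⟩) (mem_closedBall_self (by linarith))
    exact ⟨t, Finset.mem_biUnion.mpr ⟨⟨0, hi0⟩, Finset.mem_univ _,
      ((hTfin ⟨0, hi0⟩).mem_toFinset.mpr ht)⟩⟩
  -- the competing set β
  set β0 : Finset E := (α \ Sf) ∪ Γf with hβ0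
  have hβ0ne : β0.Nonempty := hΓne.mono Finset.subset_union_right
  obtain ⟨z, hzK, hzβ0⟩ : ∃ z, z ∈ K ∧ z ∉ (β0 : Set E) := by
    by_contra h
    push_neg at h
    have hKsub : K ⊆ ↑β0 := fun y hy => h y hy
    have hK0 : μ K = 0 :=
      le_antisymm (le_trans (measure_mono hKsub) (hfinnull _ β0.finite_toSet).le) (zero_le)
    have h1 : (1 : ℝ≥0∞) ≤ 0 := by
      calc (1 : ℝ≥0∞) = μ univ := measure_univ.symm
        _ = μ (K ∪ Kᶜ) := by rw [union_compl_self]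
        _ ≤ μ K + μ Kᶜ := measure_union_le K Kᶜ
        _ = 0 := by rw [hK0, hKnull, add_zero]
    simp at h1
  set βf : Finset E := insert z β0 with hβf
  have hzβf : z ∈ βf := Finset.mem_insert_self z β0
  have hβfne : βf.Nonempty := ⟨z, hzβf⟩
  -- cardinality of β
  have hβfcard : βf.card ≤ n := by
    have h1 : βf.card ≤ β0.card + 1 := Finset.card_insert_le z β0
    have hSsub : Sf ⊆ α := Finset.filter_subset _ _
    have hsd : (α \ Sf).card = α.card - Sf.card := Finset.card_sdiff_of_subset hSsub
    have h2 : β0.card ≤ (α.card - Sf.card) + Γf.card := by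
      calc β0.card ≤ (α \ Sf).card + Γf.card := Finset.card_union_le _ _
        _ = (α.card - Sf.card) + Γf.card := by rw [hsd]
    have h3 : 129 ^ q * φ k ≤ 130 ^ q * φ k :=
      Nat.mul_le_mul_right _ (Nat.pow_le_pow_left (by norm_num) q)
    have h4 : Γf.card ≤ 130 ^ q * φ k := by
      calc Γf.card ≤ φ k * 129 ^ q := hΓcard
        _ = 129 ^ q * φ k := Nat.mul_comm _ _
        _ ≤ 130 ^ q * φ k := h3
    have h5 : Sf.card ≤ α.card := Finset.card_le_card hSsub
    -- hbig : 130 ^ q * φ k < Sf.card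
    set M := 130 ^ q * φ k with hM
    omega
  -- distance comparisons
  have hfar : ∀ a, P a → ∀ y ∈ K, ρ / 4 < dist y a := by
    intro a hPa y hy
    obtain ⟨i, hi⟩ := hcov y hy
    have h9 : (9 / 4 : ℝ) * ρ < dist a (ctr k i) := by
      have h' := hPa i
      rw [mem_closedBall] at h'
      exact not_le.mp h'
    have htri : dist a (ctr k i) ≤ dist a y + dist y (ctr k i) := dist_triangle a y (ctr k i)
    rw [dist_comm y a]
    linarith
  have hattain : ∀ (F : Finset E), F.Nonempty → ∀ y : E,
      ∃ b ∈ F, infDist y (F : Set E) = dist y b := by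
    intro F hF y
    obtain ⟨b, hb, hbe⟩ :=
      F.finite_toSet.isCompact.exists_infDist_eq_dist (Finset.coe_nonempty.mpr hF) y
    exact ⟨b, by exact_mod_cast hb, hbe⟩
  have hαsplit : ∀ a ∈ α, ¬ P a → a ∈ β0 := by
    intro a ha hPa
    refine Finset.mem_union_left _ (Finset.mem_sdiff.mpr ⟨ha, ?_⟩)
    rw [hSf, Finset.mem_filter]
    tauto
  have hle_dist : ∀ y ∈ K, infDist y (βf : Set E) ≤ infDist y (α : Set E) := by
    intro y hy
    obtain ⟨a, haα, haeq⟩ := hattain α hαne y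
    rw [haeq]
    by_cases hPa : P a
    · obtain ⟨g0, hgΓ, hgd⟩ := hΓnet y hy
      have hgβ : g0 ∈ βf := Finset.mem_insert_of_mem (Finset.mem_union_right _ hgΓ)
      calc infDist y (βf : Set E) ≤ dist y g0 := infDist_le_dist_of_mem (by exact_mod_cast hgβ)
        _ ≤ ρ / 32 := hgd
        _ ≤ dist y a := by
            have := hfar a hPa y hy
            linarith
    · have : a ∈ βf := Finset.mem_insert_of_mem (hαsplit a haα hPa)
      exact infDist_le_dist_of_mem (by exact_mod_cast this)
  -- the witness point z and its scale t
  obtain ⟨b0, hb0, hδeq⟩ := hattain β0 hβ0ne z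
  set δ : ℝ := infDist z (β0 : Set E) with hδdef
  have hδpos : 0 < δ := by
    have hzb : z ≠ b0 := by
      intro h
      exact hzβ0 (by exact_mod_cast h ▸ hb0)
    rw [hδeq]
    exact dist_pos.mpr hzb
  set t : ℝ := min δ (ρ / 4) with htdef
  have htpos : 0 < t := lt_min hδpos (by linarith)
  have htρ : t ≤ ρ / 4 := min_le_right _ _
  have htδ : t ≤ δ := min_le_left _ _
  have hstrict : ∀ y, y ∈ closedBall z (t / 8) → y ∈ K →
      infDist y (βf : Set E) ≤ t / 8 ∧ 7 * t / 8 ≤ infDist y (α : Set E) := by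
    intro y hyb hyK
    have hyz : dist y z ≤ t / 8 := mem_closedBall.mp hyb
    constructor
    · exact le_trans (infDist_le_dist_of_mem (by exact_mod_cast hzβf)) hyz
    · obtain ⟨a, haα, haeq⟩ := hattain α hαne y
      rw [haeq]
      by_cases hPa : P a
      · have := hfar a hPa y hyK
        linarith
      · have haβ0 : a ∈ β0 := hαsplit a haα hPa
        have h1 : δ ≤ dist z a := infDist_le_dist_of_mem (by exact_mod_cast haβ0)
        have htri : dist z a ≤ dist z y + dist y a := dist_triangle z y a
        have hzy : dist z y ≤ t / 8 := by rw [dist_comm]; exact hyz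
        linarith
  -- integrals
  have hfc : Continuous fun y : E => infDist y (βf : Set E) ^ r :=
    (continuous_infDist_pt _).rpow_const fun x => Or.inr hr.le
  have hgc : Continuous fun y : E => infDist y (α : Set E) ^ r :=
    (continuous_infDist_pt _).rpow_const fun x => Or.inr hr.le
  obtain ⟨a0, ha0⟩ := hαne
  have hnormbd : ∀ (w : E), w ∈ K → ∀ (b : E), dist w b ≤ R + ‖b‖ := by
    intro w hw b
    have h3 : ‖w‖ ≤ R := by
      have := hKR hw
      rwa [mem_closedBall, dist_zero_right] at this
    calc dist w b ≤ dist w 0 + dist 0 b := dist_triangle w 0 b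
      _ = ‖w‖ + ‖b‖ := by rw [dist_zero_right, dist_zero_left]
      _ ≤ R + ‖b‖ := by linarith
  have hIg : Integrable (fun y : E => infDist y (α : Set E) ^ r) μ := by
    refine Integrable.mono' (integrable_const ((R + ‖a0‖) ^ r)) hgc.aestronglyMeasurable ?_
    refine hKae.mono fun y hy => ?_
    rw [Real.norm_of_nonneg (Real.rpow_nonneg infDist_nonneg r)]
    refine Real.rpow_le_rpow infDist_nonneg ?_ hr.le
    exact le_trans (infDist_le_dist_of_mem (by exact_mod_cast ha0)) (hnormbd y hy a0)
  have hIf : Integrable (fun y : E => infDist y (βf : Set E) ^ r) μ := by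
    refine Integrable.mono' (integrable_const ((R + ‖z‖) ^ r)) hfc.aestronglyMeasurable ?_
    refine hKae.mono fun y hy => ?_
    rw [Real.norm_of_nonneg (Real.rpow_nonneg infDist_nonneg r)]
    refine Real.rpow_le_rpow infDist_nonneg ?_ hr.le
    exact le_trans (infDist_le_dist_of_mem (by exact_mod_cast hzβf)) (hnormbd y hy z)
  have hfg : (fun y : E => infDist y (βf : Set E) ^ r) ≤ᵐ[μ]
      (fun y : E => infDist y (α : Set E) ^ r) :=
    hKae.mono fun y hy => Real.rpow_le_rpow infDist_nonneg (hle_dist y hy) hr.le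
  have hle : (∫ y, infDist y (βf : Set E) ^ r ∂μ) ≤ ∫ y, infDist y (α : Set E) ^ r ∂μ :=
    integral_mono_ae hIf hIg hfg
  have hlt : (∫ y, infDist y (βf : Set E) ^ r ∂μ) < ∫ y, infDist y (α : Set E) ^ r ∂μ := by
    rcases hle.lt_or_eq with h | h
    · exact h
    · exfalso
      have hsubInt : Integrable
          (fun y : E => infDist y (α : Set E) ^ r - infDist y (βf : Set E) ^ r) μ :=
        hIg.sub hIf
      have hzero : (∫ y, (infDist y (α : Set E) ^ r - infDist y (βf : Set E) ^ r) ∂μ) = 0 := by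
        rw [integral_sub hIg hIf, h, sub_self]
      have hae0 : (fun y : E => infDist y (α : Set E) ^ r - infDist y (βf : Set E) ^ r)
          =ᵐ[μ] 0 := by
        refine (integral_eq_zero_iff_of_nonneg_ae ?_ hsubInt).mp hzero
        exact hfg.mono fun y hy => sub_nonneg.mpr hy
      have hgood : ∀ᵐ y ∂μ,
          (infDist y (α : Set E) ^ r - infDist y (βf : Set E) ^ r = 0 ∧ y ∈ K) :=
        (hae0.mono fun y hy => hy).and hKae
      have hball : 0 < μ (closedBall z (t / 8)) := by
        have hz' : 0 < μ (ball z (t / 8)) := hzK (t / 8) (by linarith)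
        exact lt_of_lt_of_le hz' (measure_mono ball_subset_closedBall)
      have hcompl : μ {y | ¬ (infDist y (α : Set E) ^ r - infDist y (βf : Set E) ^ r = 0
          ∧ y ∈ K)} = 0 := ae_iff.mp hgood
      have hposS : μ (closedBall z (t / 8) ∩
          {y | infDist y (α : Set E) ^ r - infDist y (βf : Set E) ^ r = 0 ∧ y ∈ K}) ≠ 0 := by
        intro h0
        have hsub2 : closedBall z (t / 8) ⊆ (closedBall z (t / 8) ∩
            {y | infDist y (α : Set E) ^ r - infDist y (βf : Set E) ^ r = 0 ∧ y ∈ K}) ∪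
            {y | ¬ (infDist y (α : Set E) ^ r - infDist y (βf : Set E) ^ r = 0 ∧ y ∈ K)} := by
          intro y hy
          by_cases hP : infDist y (α : Set E) ^ r - infDist y (βf : Set E) ^ r = 0 ∧ y ∈ K
          · exact Or.inl ⟨hy, hP⟩
          · exact Or.inr hP
        have hle2 := le_trans (measure_mono hsub2) (measure_union_le (μ := μ) _ _)
        rw [h0, hcompl, add_zero] at hle2
        exact absurd hball (by simpa using hle2)
      obtain ⟨y, hy⟩ := nonempty_of_measure_ne_zero hposS
      have hyb := hy.1
      have hyeq := hy.2.1
      have hyK := hy.2.2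
      obtain ⟨h1, h2⟩ := hstrict y hyb hyK
      have hflt : infDist y (βf : Set E) ^ r < infDist y (α : Set E) ^ r := by
        refine Real.rpow_lt_rpow infDist_nonneg ?_ hr
        calc infDist y (βf : Set E) ≤ t / 8 := h1
          _ < 7 * t / 8 := by linarith
          _ ≤ infDist y (α : Set E) := h2
      linarith
  have hmem : (∫ y, infDist y (βf : Set E) ^ r ∂μ) ∈ quantSet μ r n :=
    ⟨βf, hβfne, hβfcard, rfl⟩
  have hbdd : BddBelow (quantSet μ r n) := by
    refine ⟨0, fun I hI => ?_⟩
    obtain ⟨γ, _, _, hIeq⟩ := hI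
    rw [hIeq]
    exact integral_nonneg fun x => Real.rpow_nonneg infDist_nonneg r
  have hinf : quantErrPow μ r n ≤ ∫ y, infDist y (βf : Set E) ^ r ∂μ := csInf_le hbdd hmem
  rw [hαopt] at hlt
  exact absurd hinf (not_le.mpr hlt)
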